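/- Let q be a prime power and k ≥ 1 with gcd(k, q-1) > 1. Then the 2-fold strong product Paley_k(F_q) ⊠ Paley_k(F_q) contains an independent set of size q. Concretely, if β ∈ F_q is not a k-th power, then {(x, βx) : x ∈ F_q} is an independent set: for distinct x, y ∈ F_q, not both of x - y and β(x - y) are k-th powers in F_q. -/
import Mathlib


/-- `Paley_k(F_q) ⊠ Paley_k(F_q)` contains an independent set of size `q`:
for a non-k-th-power `β`, the set `{(x, βx)}` is independent: for distinct `x, y`,
not both of `x - y` and `β(x - y)` are k-th powers. -/
theorem paley_product_indep_set {K : Type*} [Field K] [Fintype K] (q k : ℕ)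
    (hq : Fintype.card K = q) (hk : 1 ≤ k) (hgcd : 1 < Nat.gcd k (q - 1)) :
    ∃ β : K, (¬ ∃ z : K, β = z ^ k) ∧
      Set.ncard {p : K × K | ∃ x : K, p = (x, β * x)} = q ∧
      ∀ x y : K, x ≠ y →
        ¬ ((∃ z : K, x - y = z ^ k) ∧ (∃ z : K, β * x - β * y = z ^ k)) := by
  classical
  set d := Nat.gcd k (q - 1) with hd
  have hdk : d ∣ k := Nat.gcd_dvd_left _ _
  have hdq : d ∣ q - 1 := Nat.gcd_dvd_right _ _
  have hcardu : Fintype.card Kˣ = q - 1 := by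
    rw [Fintype.card_units, hq]
  have hq1 : 0 < q - 1 := by
    have := Fintype.one_lt_card (α := K)
    omega
  -- find a nontrivial element u of Kˣ with u ^ k = 1
  obtain ⟨g, hg⟩ := IsCyclic.exists_ofOrder_eq_natCard (α := Kˣ)
  have hgord : orderOf g = q - 1 := by rwa [Nat.card_eq_fintype_card, hcardu] at hg
  have hdpos : 0 < d := lt_trans Nat.zero_lt_one hgcd
  set m := (q - 1) / d with hm
  have hmd : m * d = q - 1 := Nat.div_mul_cancel hdq
  have hmpos : 0 < m := by
    rcases Nat.eq_zero_or_pos m with h | h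
    · rw [h, zero_mul] at hmd; omega
    · exact h
  have hmlt : m < q - 1 := by
    nlinarith [hmpos]
  set u : Kˣ := g ^ m with hu
  have huk : u ^ k = 1 := by
    rw [hu, ← pow_mul, ← orderOf_dvd_iff_pow_eq_one, hgord]
    obtain ⟨c, hc⟩ := hdk
    exact ⟨c, by rw [hc, ← mul_assoc, hmd]⟩
  have hune : u ≠ 1 := by
    rw [hu, Ne, ← orderOf_dvd_iff_pow_eq_one, hgord]
    intro h
    have := Nat.le_of_dvd hmpos h
    omega
  -- the k-th power map on Kˣ is not injective, hence not surjective
  have hninj : ¬ Function.Injective (fun z : Kˣ => z ^ k) := by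
    intro h
    exact hune (h (by simp [huk]))
  have hnsurj : ¬ Function.Surjective (fun z : Kˣ => z ^ k) := by
    intro h
    exact hninj (Finite.injective_iff_surjective.mpr h)
  unfold Function.Surjective at hnsurj
  push_neg at hnsurj
  obtain ⟨βu, hβu⟩ := hnsurj
  refine ⟨(βu : K), ?_, ?_, ?_⟩
  · rintro ⟨z, hz⟩
    have hz0 : z ≠ 0 := by
      intro h
      rw [h, zero_pow (by omega)] at hz
      exact βu.ne_zero hz
    refine hβu (Units.mk0 z hz0) (Units.ext ?_)
    simpa using hz.symm
  · have hset : {p : K × K | ∃ x : K, p = (x, (βu : K) * x)} =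
        (fun x : K => (x, (βu : K) * x)) '' Set.univ := by
      ext p
      simp [eq_comm]
    rw [hset, Set.ncard_image_of_injective _ (fun a b h => (Prod.mk.injEq _ _ _ _ ▸ h).1),
      Set.ncard_univ, Nat.card_eq_fintype_card, hq]
  · rintro x y hxy ⟨⟨z, hz⟩, ⟨w, hw⟩⟩
    have hsub : x - y ≠ 0 := sub_ne_zero.mpr hxy
    have hz0 : z ≠ 0 := by
      intro h
      rw [h, zero_pow (by omega)] at hz
      exact hsub hz
    have hβ : (βu : K) = (w / z) ^ k := by
      have : (βu : K) * (x - y) = w ^ k := by rw [← hw]; ring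
      rw [div_pow, eq_div_iff (pow_ne_zero _ hz0), ← hz, this]
    have hw0 : w / z ≠ 0 := by
      intro h
      rw [h, zero_pow (by omega)] at hβ
      exact βu.ne_zero hβ
    refine hβu (Units.mk0 (w / z) hw0) (Units.ext ?_)
    simpa using hβ.symm
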